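/- Let a > 0 and φ(z) = 1 + z + a z². If 0 < a ≤ (2 + √2)/4, then Re φ(z) > 0 for every z in the open unit disk 𝔻. -/

import Mathlib

theorem re_phi_pos (a : ℝ) (ha : 0 < a) (ha2 : a ≤ (2 + Real.sqrt 2) / 4) :
    ∀ z ∈ Metric.ball (0 : ℂ) 1, 0 < ((1 + z + (a : ℂ) * z ^ 2).re) := by
  intro z hz
  have hz1 : z.re ^ 2 + z.im ^ 2 < 1 := by
    have := mem_ball_zero_iff.mp hz
    have h := Complex.sq_norm z
    rw [Complex.normSq_apply] at h
    nlinarith [norm_nonneg z, this]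
  set x := z.re
  set y := z.im
  have hre : (1 + z + (a : ℂ) * z ^ 2).re = 1 + x + a * (x^2 - y^2) := by
    simp [Complex.add_re, Complex.mul_re, pow_two]
    rfl
  rw [hre]
  have hs : Real.sqrt 2 ^ 2 = 2 := Real.sq_sqrt (by norm_num)
  have hs1 : (1:ℝ) ≤ Real.sqrt 2 := by nlinarith [Real.sqrt_nonneg 2]
  have hx1 : x^2 ≤ 1 := by nlinarith [sq_nonneg y]
  have key : 0 ≤ 2*a*x^2 + x + 1 - a := by
    rcases le_or_gt a (1/4) with hc | hc
    · have hxm : (0:ℝ) ≤ x + 1 := by nlinarith [sq_nonneg (x+1)]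
      nlinarith [mul_nonneg hxm (by nlinarith [mul_nonneg ha.le hxm] : (0:ℝ) ≤ 2*a*(x-1)+1)]
    · have h1 : (0:ℝ) ≤ Real.sqrt 2 - (4*a - 2) := by nlinarith
      have h2 : (0:ℝ) ≤ Real.sqrt 2 + (4*a - 2) := by nlinarith
      nlinarith [sq_nonneg (4*a*x+1), mul_nonneg h1 h2, hs]
  nlinarith [mul_pos ha (by nlinarith : (0:ℝ) < 1 - x^2 - y^2 + (x^2+y^2) - (x^2+y^2))]
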